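/- (No purifying in finite time.) Let h be an n×n complex matrix and let ρ : ℝ → (n×n complex matrices) be differentiable with ρ'(t) = D_h(ρ(t)) for all t. If ρ(0) is positive semidefinite, then for every t ≥ 0 the rank of ρ(t) is at least the rank of ρ(0); the rank cannot decrease along the evolution. -/

import Mathlib

open Matrix
open scoped ComplexOrder

namespace Stmt6Aux

open NormedSpace Set


variable {n : ℕ}

/-! ### Matrix exponential facts (proved with the `linfty` operator-norm instances) -/

noncomputable def matExp (K : Matrix (Fin n) (Fin n) ℂ) (s : ℝ) : Matrix (Fin n) (Fin n) ℂ :=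
  exp (s • K)

theorem matExp_entry_hasDerivAt (K : Matrix (Fin n) (Fin n) ℂ) (t : ℝ) (i j : Fin n) :
    HasDerivAt (fun s : ℝ => matExp K s i j) ((matExp K t * K) i j) t := by
  letI : NormedRing (Matrix (Fin n) (Fin n) ℂ) := Matrix.linftyOpNormedRing
  letI : NormedAlgebra ℝ (Matrix (Fin n) (Fin n) ℂ) := Matrix.linftyOpNormedAlgebra
  have H : HasDerivAt (fun s : ℝ => exp (s • K)) (exp (t • K) * K) t :=
    hasDerivAt_exp_smul_const K t
  haveI : FiniteDimensional ℝ (Matrix (Fin n) (Fin n) ℂ) :=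
    inferInstanceAs (FiniteDimensional ℝ (Fin n → Fin n → ℂ))
  let L : Matrix (Fin n) (Fin n) ℂ →ₗ[ℝ] ℂ :=
    { toFun := fun A => A i j, map_add' := fun _ _ => rfl, map_smul' := fun _ _ => rfl }
  exact L.toContinuousLinearMap.hasFDerivAt.comp_hasDerivAt t H

theorem matExp_entry_continuous (K : Matrix (Fin n) (Fin n) ℂ) (i j : Fin n) :
    Continuous fun s : ℝ => matExp K s i j :=
  continuous_iff_continuousAt.mpr fun t => (matExp_entry_hasDerivAt K t i j).continuousAt

theorem matExp_zero (K : Matrix (Fin n) (Fin n) ℂ) : matExp K 0 = 1 := by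
  simp [matExp, exp_zero]

theorem matExp_conjTranspose (K : Matrix (Fin n) (Fin n) ℂ) (hK : K.IsHermitian) (s : ℝ) :
    (matExp K s)ᴴ = matExp K s := by
  rw [matExp, ← Matrix.exp_conjTranspose]
  congr 1
  ext i j
  simp [Matrix.conjTranspose_apply, Matrix.smul_apply, hK.apply, star_smul]

theorem matExp_mul_neg (K : Matrix (Fin n) (Fin n) ℂ) (s : ℝ) :
    matExp K s * matExp K (-s) = 1 := by
  letI : NormedRing (Matrix (Fin n) (Fin n) ℂ) := Matrix.linftyOpNormedRing
  letI : NormedAlgebra ℝ (Matrix (Fin n) (Fin n) ℂ) := Matrix.linftyOpNormedAlgebra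
  rw [matExp, matExp, ← Matrix.exp_add_of_commute]
  · simp [exp_zero]
  · exact (Commute.refl K).smul_left s |>.smul_right (-s)

theorem matExp_neg_mul (K : Matrix (Fin n) (Fin n) ℂ) (s : ℝ) :
    matExp K (-s) * matExp K s = 1 := by
  have := matExp_mul_neg K (-s)
  rwa [neg_neg] at this

theorem matExp_comm_K (K : Matrix (Fin n) (Fin n) ℂ) (s : ℝ) :
    matExp K s * K = K * matExp K s := by
  letI : NormedRing (Matrix (Fin n) (Fin n) ℂ) := Matrix.linftyOpNormedRing
  letI : NormedAlgebra ℝ (Matrix (Fin n) (Fin n) ℂ) := Matrix.linftyOpNormedAlgebra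
  exact (((Commute.refl K).smul_left s).exp_left).symm ▸ rfl

/-! ### The real quadratic form `Qf` and the "negative part" sup `negSup` -/

noncomputable def Qf (A : Matrix (Fin n) (Fin n) ℂ) (v : Fin n → ℂ) : ℝ :=
  (star v ⬝ᵥ A *ᵥ v).re

theorem Qf_expand (A : Matrix (Fin n) (Fin n) ℂ) (v : Fin n → ℂ) :
    Qf A v = (∑ i, ∑ j, star (v i) * A i j * v j).re := by
  simp [Qf, dotProduct, mulVec, Finset.mul_sum, mul_assoc, mul_comm, mul_left_comm]

theorem Qf_add (A B : Matrix (Fin n) (Fin n) ℂ) (v : Fin n → ℂ) :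
    Qf (A + B) v = Qf A v + Qf B v := by
  simp [Qf, add_mulVec, dotProduct_add]

theorem Qf_abs_le (A : Matrix (Fin n) (Fin n) ℂ) {v : Fin n → ℂ} (hv : ‖v‖ ≤ 1) :
    |Qf A v| ≤ ∑ i, ∑ j, ‖A i j‖ := by
  rw [Qf_expand]
  calc |(∑ i, ∑ j, star (v i) * A i j * v j).re|
      ≤ ‖∑ i, ∑ j, star (v i) * A i j * v j‖ := by
        exact Complex.abs_re_le_norm _
    _ ≤ ∑ i, ∑ j, ‖A i j‖ := by
        refine (norm_sum_le _ _).trans (Finset.sum_le_sum fun i _ => ?_)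
        refine (norm_sum_le _ _).trans (Finset.sum_le_sum fun j _ => ?_)
        have hvi : ‖v i‖ ≤ 1 := (norm_le_pi_norm v i).trans hv
        have hvj : ‖v j‖ ≤ 1 := (norm_le_pi_norm v j).trans hv
        calc ‖star (v i) * A i j * v j‖ = ‖v i‖ * ‖A i j‖ * ‖v j‖ := by simp [norm_mul]
          _ ≤ 1 * ‖A i j‖ * 1 := by gcongr
          _ = ‖A i j‖ := by ring

theorem Qf_conj_mul (A B : Matrix (Fin n) (Fin n) ℂ) (v : Fin n → ℂ) :
    Qf (B * A * Bᴴ) v = Qf A (Bᴴ *ᵥ v) := by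
  unfold Qf
  congr 1
  rw [star_mulVec, conjTranspose_conjTranspose, ← mulVec_mulVec, ← mulVec_mulVec,
    dotProduct_mulVec (star v) B]

theorem Qf_smul (A : Matrix (Fin n) (Fin n) ℂ) (v : Fin n → ℂ) (c : ℝ) :
    Qf A ((c : ℂ) • v) = c ^ 2 * Qf A v := by
  unfold Qf
  rw [mulVec_smul, star_smul, smul_dotProduct, dotProduct_smul]
  simp [Complex.re_ofReal_mul, smul_eq_mul]
  ring

noncomputable def negSup (A : Matrix (Fin n) (Fin n) ℂ) : ℝ :=
  sSup ((fun v => -Qf A v) '' Metric.closedBall (0 : Fin n → ℂ) 1)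

theorem Qf_zero_vec (A : Matrix (Fin n) (Fin n) ℂ) : Qf A 0 = 0 := by
  simp [Qf]

theorem negSup_bddAbove (A : Matrix (Fin n) (Fin n) ℂ) :
    BddAbove ((fun v => -Qf A v) '' Metric.closedBall (0 : Fin n → ℂ) 1) := by
  refine ⟨∑ i, ∑ j, ‖A i j‖, ?_⟩
  rintro x ⟨v, hv, rfl⟩
  have h1 : ‖v‖ ≤ 1 := by simpa [Metric.mem_closedBall, dist_zero_right] using hv
  have h2 := Qf_abs_le A h1
  dsimp only
  linarith [neg_abs_le (Qf A v)]

theorem le_negSup (A : Matrix (Fin n) (Fin n) ℂ) {v : Fin n → ℂ} (hv : ‖v‖ ≤ 1) :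
    -Qf A v ≤ negSup A :=
  le_csSup (negSup_bddAbove A) ⟨v, by simpa [Metric.mem_closedBall, dist_zero_right] using hv, rfl⟩

theorem negSup_nonneg (A : Matrix (Fin n) (Fin n) ℂ) : 0 ≤ negSup A := by
  have := le_negSup A (v := 0) (by simp)
  simpa [Qf_zero_vec] using this

theorem negSup_le (A : Matrix (Fin n) (Fin n) ℂ) {c : ℝ}
    (hc : ∀ v : Fin n → ℂ, ‖v‖ ≤ 1 → -Qf A v ≤ c) : negSup A ≤ c := by
  refine csSup_le ⟨0, ⟨0, by simp, by simp [Qf_zero_vec]⟩⟩ ?_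
  rintro x ⟨v, hv, rfl⟩
  exact hc v (by simpa [Metric.mem_closedBall, dist_zero_right] using hv)

theorem neg_Qf_le (A : Matrix (Fin n) (Fin n) ℂ) (v : Fin n → ℂ) :
    -Qf A v ≤ ‖v‖ ^ 2 * negSup A := by
  rcases eq_or_ne v 0 with rfl | hv
  · simp [Qf_zero_vec]
  · have hnv : (0:ℝ) < ‖v‖ := norm_pos_iff.mpr hv
    set c : ℝ := ‖v‖⁻¹ with hc
    have hcv : ‖(c : ℂ) • v‖ ≤ 1 := by
      rw [norm_smul]
      simp [hc, abs_of_nonneg (inv_nonneg.mpr hnv.le), inv_mul_cancel₀ hnv.ne']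
    have h1 : -Qf A ((c : ℂ) • v) ≤ negSup A := le_negSup A hcv
    rw [Qf_smul] at h1
    have hcc : ‖v‖ * c = 1 := mul_inv_cancel₀ hnv.ne'
    have key : ‖v‖ ^ 2 * c ^ 2 = 1 := by rw [← mul_pow, hcc]; norm_num
    have h2 := mul_le_mul_of_nonneg_left h1 (sq_nonneg ‖v‖)
    have h3 : -Qf A v = ‖v‖ ^ 2 * -(c ^ 2 * Qf A v) := by
      linear_combination (Qf A v) * key
    rw [h3]
    exact h2

theorem negSup_sub_le (A B : Matrix (Fin n) (Fin n) ℂ) :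
    negSup A ≤ negSup B + ∑ i, ∑ j, ‖A i j - B i j‖ := by
  refine negSup_le A fun v hv => ?_
  have hAB : A = B + (A - B) := by abel
  have h1 : Qf A v = Qf B v + Qf (A - B) v := by
    nth_rewrite 1 [hAB]; rw [Qf_add]
  have h2 := Qf_abs_le (A - B) hv
  have h3 := le_negSup B hv
  have h4 : -Qf (A - B) v ≤ ∑ i, ∑ j, ‖A i j - B i j‖ := by
    refine (neg_le_abs _).trans ?_
    calc |Qf (A - B) v| ≤ ∑ i, ∑ j, ‖(A - B) i j‖ := h2
      _ = ∑ i, ∑ j, ‖A i j - B i j‖ := by simp [Matrix.sub_apply]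
  linarith

/-! ### A Grönwall-type lemma -/

theorem gronwall_zero {N : ℝ → ℝ} {C T : ℝ} (hN : Continuous N) (h0 : ∀ s, 0 ≤ N s)
    (hle : ∀ s ∈ Icc (0:ℝ) T, N s ≤ C * ∫ u in (0:ℝ)..s, N u) :
    ∀ s ∈ Icc (0:ℝ) T, N s = 0 := by
  set G : ℝ → ℝ := fun t => ∫ u in (0:ℝ)..t, N u with hG
  have hGd : ∀ t : ℝ, HasDerivAt G (N t) t := by
    intro t
    exact intervalIntegral.integral_hasDerivAt_right
      (hN.intervalIntegrable _ _)
      (hN.stronglyMeasurableAtFilter _ _)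
      hN.continuousAt
  have hGnonneg : ∀ s ∈ Icc (0:ℝ) T, 0 ≤ G s := fun s hs =>
    intervalIntegral.integral_nonneg hs.1 (fun u _ => h0 u)
  have key : ∀ s ∈ Icc (0:ℝ) T, ‖G s‖ ≤ gronwallBound 0 C 0 (s - 0) := by
    refine norm_le_gronwallBound_of_norm_deriv_right_le
      (fun s _ => (hGd s).continuousAt.continuousWithinAt)
      (fun s _ => (hGd s).hasDerivWithinAt) (by simp [hG]) ?_
    intro s hs
    have h1 : N s ≤ C * G s := hle s ⟨hs.1, hs.2.le⟩
    have h2 : 0 ≤ G s := hGnonneg s ⟨hs.1, hs.2.le⟩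
    rw [Real.norm_eq_abs, Real.norm_eq_abs, abs_of_nonneg (h0 s), abs_of_nonneg h2]
    linarith
  intro s hs
  have hGz : G s = 0 := by
    have := key s hs
    rw [gronwallBound_ε0] at this
    simp only [zero_mul] at this
    exact norm_le_zero_iff.mp (this.trans_eq rfl)
  have h5 := hle s hs
  have h6 : C * ∫ u in (0:ℝ)..s, N u = 0 := by
    have : (∫ u in (0:ℝ)..s, N u) = 0 := hGz
    rw [this, mul_zero]
  exact le_antisymm (h5.trans_eq h6) (h0 s)

/-! ### Entrywise calculus helpers -/

theorem entry_deriv_mul {f g : ℝ → Matrix (Fin n) (Fin n) ℂ} {f' g' : Matrix (Fin n) (Fin n) ℂ}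
    {u : ℝ} (hf : ∀ i j, HasDerivAt (fun s => f s i j) (f' i j) u)
    (hg : ∀ i j, HasDerivAt (fun s => g s i j) (g' i j) u) :
    ∀ i j, HasDerivAt (fun s => (f s * g s) i j) ((f' * g u + f u * g') i j) u := by
  intro i j
  have : HasDerivAt (fun s => ∑ k, f s i k * g s k j)
      (∑ k, (f' i k * g u k j + f u i k * g' k j)) u :=
    HasDerivAt.fun_sum fun k _ => (hf i k).mul (hg k j)
  simpa [Matrix.mul_apply, Matrix.add_apply, Finset.sum_add_distrib] using this

theorem entry_cont_mul {f g : ℝ → Matrix (Fin n) (Fin n) ℂ}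
    (hf : ∀ i j, Continuous fun u => f u i j) (hg : ∀ i j, Continuous fun u => g u i j) :
    ∀ i j, Continuous fun u => (f u * g u) i j := by
  intro i j
  have : Continuous (fun u => ∑ k, f u i k * g u k j) :=
    continuous_finset_sum _ fun k _ => (hf i k).mul (hg k j)
  simpa [Matrix.mul_apply] using this

theorem Qf_hasDerivAt {F : ℝ → Matrix (Fin n) (Fin n) ℂ} {F' : Matrix (Fin n) (Fin n) ℂ} {u : ℝ}
    (hF : ∀ i j, HasDerivAt (fun s => F s i j) (F' i j) u) (v : Fin n → ℂ) :
    HasDerivAt (fun s => Qf (F s) v) (Qf F' v) u := by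
  have h1 : HasDerivAt (fun s => ∑ i, ∑ j, star (v i) * F s i j * v j)
      (∑ i, ∑ j, star (v i) * F' i j * v j) u := by
    refine HasDerivAt.fun_sum fun i _ => HasDerivAt.fun_sum fun j _ => ?_
    simpa [mul_assoc] using ((hF i j).const_mul (star (v i))).mul_const (v j)
  have h2 := Complex.reCLM.hasFDerivAt.comp_hasDerivAt u h1
  simp only [Qf_expand]
  exact h2

theorem Qf_continuous {F : ℝ → Matrix (Fin n) (Fin n) ℂ}
    (hF : ∀ i j, Continuous fun u => F u i j) (v : Fin n → ℂ) :
    Continuous fun u => Qf (F u) v := by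
  simp only [Qf_expand]
  exact Complex.continuous_re.comp
    (continuous_finset_sum _ fun i _ => continuous_finset_sum _ fun j _ =>
      ((continuous_const.mul (hF i j)).mul continuous_const))

end Stmt6Aux

open Stmt6Aux Set

attribute [local instance] Matrix.normedAddCommGroup Matrix.normedSpace

/-- The simple Lindblad generator `D_h`. -/
noncomputable def lindblad {n : ℕ} (h ρ : Matrix (Fin n) (Fin n) ℂ) :
    Matrix (Fin n) (Fin n) ℂ :=
  h * ρ * hᴴ - (1 / 2 : ℂ) • (hᴴ * h * ρ + ρ * (hᴴ * h))

/-- No purifying in finite time: the rank cannot decrease along the evolution. -/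
theorem stmt6 {n : ℕ} (h : Matrix (Fin n) (Fin n) ℂ)
    (ρ : ℝ → Matrix (Fin n) (Fin n) ℂ)
    (hderiv : ∀ t : ℝ, HasDerivAt ρ (lindblad h (ρ t)) t)
    (h0 : (ρ 0).PosSemidef) :
    ∀ t : ℝ, 0 ≤ t → (ρ 0).rank ≤ (ρ t).rank := by
  intro t ht
  classical
  set K : Matrix (Fin n) (Fin n) ℂ := (1 / 2 : ℂ) • (hᴴ * h) with hKdef
  have hKherm : K.IsHermitian := by
    have h1 : (hᴴ * h).IsHermitian := Matrix.isHermitian_conjTranspose_mul_self h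
    have : Kᴴ = star (1 / 2 : ℂ) • (hᴴ * h)ᴴ := by rw [hKdef, conjTranspose_smul]
    rw [Matrix.IsHermitian, this, h1]
    norm_num
    exact hKdef.symm
  -- entrywise derivative of ρ
  haveI : FiniteDimensional ℝ (Matrix (Fin n) (Fin n) ℂ) :=
    inferInstanceAs (FiniteDimensional ℝ (Fin n → Fin n → ℂ))
  have hρentry : ∀ (u : ℝ) (i j : Fin n),
      HasDerivAt (fun s => ρ s i j) (lindblad h (ρ u) i j) u := by
    intro u i j
    let L : Matrix (Fin n) (Fin n) ℂ →ₗ[ℝ] ℂ :=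
      { toFun := fun A => A i j, map_add' := fun _ _ => rfl, map_smul' := fun _ _ => rfl }
    exact L.toContinuousLinearMap.hasFDerivAt.comp_hasDerivAt u (hderiv u)
  have hρcont : ∀ i j, Continuous fun u => ρ u i j := fun i j =>
    continuous_iff_continuousAt.mpr fun u => (hρentry u i j).continuousAt
  have hEentry := matExp_entry_hasDerivAt K
  have hEcont := matExp_entry_continuous K
  have hEnegcont : ∀ i j, Continuous fun u : ℝ => matExp K (-u) i j := fun i j =>
    (hEcont i j).comp continuous_neg
  have hconst : ∀ (A : Matrix (Fin n) (Fin n) ℂ) (i j : Fin n),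
      Continuous fun _ : ℝ => A i j := fun _ _ _ => continuous_const
  have hconst' : ∀ (i j : Fin n), Continuous fun _ : ℝ => h i j := fun _ _ => continuous_const
  -- the conjugated density and its derivative
  set σ : ℝ → Matrix (Fin n) (Fin n) ℂ := fun s => matExp K s * (ρ s * matExp K s) with hσdef
  set D : ℝ → Matrix (Fin n) (Fin n) ℂ := fun u =>
    (matExp K u * K) * (ρ u * matExp K u) +
      matExp K u * (lindblad h (ρ u) * matExp K u + ρ u * (matExp K u * K)) with hDdef
  have hσentry : ∀ (u : ℝ) (i j : Fin n), HasDerivAt (fun s => σ s i j) (D u i j) u := by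
    intro u
    have hinner := entry_deriv_mul (hρentry u) (hEentry u)
    exact entry_deriv_mul (hEentry u) hinner
  have hσcont : ∀ i j, Continuous fun u => σ u i j := fun i j =>
    continuous_iff_continuousAt.mpr fun u => (hσentry u i j).continuousAt
  have hlindcont : ∀ i j, Continuous fun u => lindblad h (ρ u) i j := by
    have c1 := entry_cont_mul (entry_cont_mul (hconst h) hρcont) (hconst hᴴ)
    have c2 := entry_cont_mul (hconst (hᴴ * h)) hρcont
    have c3 := entry_cont_mul hρcont (hconst (hᴴ * h))
    intro i j
    have : Continuous fun u =>
        (h * ρ u * hᴴ) i j - (1 / 2 : ℂ) * ((hᴴ * h * ρ u) i j + (ρ u * (hᴴ * h)) i j) :=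
      (c1 i j).sub (continuous_const.mul ((c2 i j).add (c3 i j)))
    simpa [lindblad, Matrix.sub_apply, Matrix.smul_apply, Matrix.add_apply,
      smul_eq_mul, mul_add] using this
  have hDcont : ∀ i j, Continuous fun u => D u i j := by
    have c1 := entry_cont_mul (entry_cont_mul hEcont (hconst K))
      (entry_cont_mul hρcont hEcont)
    have c2 : ∀ i j, Continuous fun u =>
        (lindblad h (ρ u) * matExp K u + ρ u * (matExp K u * K)) i j := by
      intro i j
      have e1 := entry_cont_mul hlindcont hEcont
      have e2 := entry_cont_mul hρcont (entry_cont_mul hEcont (hconst K))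
      simp only [Matrix.add_apply]
      exact (e1 i j).add (e2 i j)
    have c3 := entry_cont_mul hEcont c2
    intro i j
    simp only [hDdef, Matrix.add_apply]
    exact (c1 i j).add (c3 i j)
  -- the cocycle B and the key algebraic identity
  set B : ℝ → Matrix (Fin n) (Fin n) ℂ := fun u => matExp K u * (h * matExp K (-u)) with hBdef
  have hlin : ∀ X : Matrix (Fin n) (Fin n) ℂ,
      lindblad h X = h * (X * hᴴ) - (K * X + X * K) := by
    intro X
    simp [lindblad, hKdef, smul_add, Matrix.smul_mul, Matrix.mul_smul, Matrix.mul_assoc]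
  have hDeq : ∀ u, D u = B u * σ u * (B u)ᴴ := by
    intro u
    have e1' : ∀ X : Matrix (Fin n) (Fin n) ℂ, matExp K u * (matExp K (-u) * X) = X := by
      intro X; rw [← Matrix.mul_assoc, matExp_mul_neg, Matrix.one_mul]
    have e2' : ∀ X : Matrix (Fin n) (Fin n) ℂ, matExp K (-u) * (matExp K u * X) = X := by
      intro X; rw [← Matrix.mul_assoc, matExp_neg_mul, Matrix.one_mul]
    have hrhs : B u * σ u * (B u)ᴴ = matExp K u * (h * (ρ u * (hᴴ * matExp K u))) := by
      simp only [hBdef, hσdef, conjTranspose_mul, matExp_conjTranspose K hKherm,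
        Matrix.mul_assoc, e1', e2']
    have comm' : ∀ X : Matrix (Fin n) (Fin n) ℂ,
        K * (matExp K u * X) = matExp K u * (K * X) := by
      intro X; rw [← Matrix.mul_assoc, ← matExp_comm_K, Matrix.mul_assoc]
    have hlhs : D u = matExp K u * (h * (ρ u * (hᴴ * matExp K u))) := by
      simp only [hDdef, hlin, Matrix.mul_add, Matrix.add_mul, Matrix.mul_sub, Matrix.sub_mul,
        Matrix.mul_assoc, matExp_comm_K, comm']
      abel
    rw [hlhs, hrhs]
  -- continuity of B's entry-sum and a uniform bound
  have hBcont : ∀ i j, Continuous fun u => B u i j :=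
    entry_cont_mul hEcont (entry_cont_mul hconst' hEnegcont)
  set b : ℝ → ℝ := fun u => ∑ i, ∑ j, ‖B u i j‖ with hbdef
  have hbcont : Continuous b :=
    continuous_finset_sum _ fun i _ => continuous_finset_sum _ fun j _ => (hBcont i j).norm
  have hbnonneg : ∀ u, 0 ≤ b u := fun u =>
    Finset.sum_nonneg fun i _ => Finset.sum_nonneg fun j _ => norm_nonneg _
  obtain ⟨u₀, hu₀mem, hu₀'⟩ :=
    isCompact_Icc.exists_isMaxOn (nonempty_Icc.mpr ht) hbcont.continuousOn
  have hu₀ : ∀ u ∈ Icc (0:ℝ) t, b u ≤ b u₀ := fun u hu => hu₀' hu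
  set C : ℝ := (b u₀) ^ 2 with hCdef
  -- bound on mulVec by Bᴴ
  have hwbound : ∀ (u : ℝ) (v : Fin n → ℂ), ‖v‖ ≤ 1 → ‖(B u)ᴴ *ᵥ v‖ ≤ b u := by
    intro u v hv
    refine (pi_norm_le_iff_of_nonneg (hbnonneg u)).mpr fun i => ?_
    have : ((B u)ᴴ *ᵥ v) i = ∑ k, star (B u k i) * v k := by
      simp [Matrix.mulVec, dotProduct, Matrix.conjTranspose_apply]
    rw [this]
    calc ‖∑ k, star (B u k i) * v k‖ ≤ ∑ k, ‖star (B u k i) * v k‖ := norm_sum_le _ _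
      _ ≤ ∑ k, ‖B u k i‖ := by
          refine Finset.sum_le_sum fun k _ => ?_
          rw [norm_mul, norm_star]
          have : ‖v k‖ ≤ 1 := (norm_le_pi_norm v k).trans hv
          calc ‖B u k i‖ * ‖v k‖ ≤ ‖B u k i‖ * 1 := by gcongr
            _ = ‖B u k i‖ := mul_one _
      _ ≤ b u := by
          refine Finset.sum_le_sum fun k _ => ?_
          exact Finset.single_le_sum (f := fun j => ‖B u k j‖)
            (fun j _ => norm_nonneg _) (Finset.mem_univ i)
  -- the negative-part function N
  set N : ℝ → ℝ := fun u => negSup (σ u) with hNdef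
  have hNnonneg : ∀ u, 0 ≤ N u := fun u => negSup_nonneg _
  have hNcont : Continuous N := by
    rw [continuous_iff_continuousAt]
    intro u₁
    set m : ℝ → ℝ := fun u => ∑ i, ∑ j, ‖σ u i j - σ u₁ i j‖ with hmdef
    have hm : Continuous m := continuous_finset_sum _ fun i _ =>
      continuous_finset_sum _ fun j _ => ((hσcont i j).sub continuous_const).norm
    have hm0 : m u₁ = 0 := by simp [hmdef]
    have hub : ∀ u, N u ≤ N u₁ + m u := fun u => negSup_sub_le (σ u) (σ u₁)
    have hlb : ∀ u, N u₁ - m u ≤ N u := by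
      intro u
      have := negSup_sub_le (σ u₁) (σ u)
      have hsymm : (∑ i, ∑ j, ‖σ u₁ i j - σ u i j‖) = m u := by
        simp only [hmdef, norm_sub_rev]
      rw [hsymm] at this
      linarith
    have t1 : Filter.Tendsto (fun u => N u₁ - m u) (nhds u₁) (nhds (N u₁)) := by
      have hc : Continuous fun u => N u₁ - m u := continuous_const.sub hm
      simpa [hm0] using hc.tendsto u₁
    have t2 : Filter.Tendsto (fun u => N u₁ + m u) (nhds u₁) (nhds (N u₁)) := by
      have hc : Continuous fun u => N u₁ + m u := continuous_const.add hm
      simpa [hm0] using hc.tendsto u₁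
    exact tendsto_of_tendsto_of_tendsto_of_le_of_le t1 t2 hlb hub
  -- FTC for the quadratic form along σ
  have hFTC : ∀ (v : Fin n → ℂ) (s : ℝ),
      ∫ u in (0:ℝ)..s, Qf (D u) v = Qf (σ s) v - Qf (σ 0) v := by
    intro v s
    exact intervalIntegral.integral_eq_sub_of_hasDerivAt
      (fun u _ => Qf_hasDerivAt (hσentry u) v)
      ((Qf_continuous hDcont v).intervalIntegrable _ _)
  have hσ0 : σ 0 = ρ 0 := by simp [hσdef, matExp_zero]
  have hQρ0 : ∀ v : Fin n → ℂ, 0 ≤ Qf (ρ 0) v := by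
    intro v
    have h2 := h0.dotProduct_mulVec_nonneg v
    have := (Complex.le_def.mp h2).1
    simpa [Qf] using this
  have hQD : ∀ (v : Fin n → ℂ) (u : ℝ), Qf (D u) v = Qf (σ u) ((B u)ᴴ *ᵥ v) := by
    intro v u
    rw [hDeq u, Qf_conj_mul]
  -- the Grönwall inequality
  have hineq : ∀ s ∈ Icc (0:ℝ) t, N s ≤ C * ∫ u in (0:ℝ)..s, N u := by
    intro s hs
    refine negSup_le (σ s) fun v hv => ?_
    have hmono : (∫ u in (0:ℝ)..s, -Qf (D u) v) ≤ ∫ u in (0:ℝ)..s, C * N u := by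
      refine intervalIntegral.integral_mono_on hs.1
        (((Qf_continuous hDcont v).neg).intervalIntegrable _ _)
        ((continuous_const.mul hNcont).intervalIntegrable _ _) ?_
      intro u hu
      have humem : u ∈ Icc (0:ℝ) t := ⟨hu.1, hu.2.trans hs.2⟩
      have step1 : -Qf (σ u) ((B u)ᴴ *ᵥ v) ≤ ‖(B u)ᴴ *ᵥ v‖ ^ 2 * N u := neg_Qf_le _ _
      have hwle : ‖(B u)ᴴ *ᵥ v‖ ≤ b u := hwbound u v hv
      have hbuC : b u ≤ b u₀ := hu₀ u humem
      have k1 : ‖(B u)ᴴ *ᵥ v‖ ^ 2 * N u ≤ (b u) ^ 2 * N u :=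
        mul_le_mul_of_nonneg_right (pow_le_pow_left₀ (norm_nonneg _) hwle 2) (hNnonneg u)
      have k2 : (b u) ^ 2 * N u ≤ C * N u := by
        rw [hCdef]
        exact mul_le_mul_of_nonneg_right (pow_le_pow_left₀ (hbnonneg u) hbuC 2) (hNnonneg u)
      rw [hQD v u]
      linarith
    have hsplit : -Qf (σ s) v = -Qf (σ 0) v + ∫ u in (0:ℝ)..s, -Qf (D u) v := by
      rw [intervalIntegral.integral_neg, hFTC v s]
      ring
    have hmul : (∫ u in (0:ℝ)..s, C * N u) = C * ∫ u in (0:ℝ)..s, N u :=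
      intervalIntegral.integral_const_mul _ _
    have h00 : 0 ≤ Qf (σ 0) v := by rw [hσ0]; exact hQρ0 v
    rw [hsplit]
    rw [hmul] at hmono
    linarith
  have hNzero : ∀ s ∈ Icc (0:ℝ) t, N s = 0 := gronwall_zero hNcont hNnonneg hineq
  -- σ is (re-)positive on [0, t]
  have hσpos : ∀ u ∈ Icc (0:ℝ) t, ∀ w : Fin n → ℂ, 0 ≤ Qf (σ u) w := by
    intro u hu w
    have := neg_Qf_le (σ u) w
    rw [show negSup (σ u) = 0 from hNzero u hu] at this
    simpa using this
  -- monotonicity of the quadratic form at time t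
  have hmono2 : ∀ v : Fin n → ℂ, Qf (σ 0) v ≤ Qf (σ t) v := by
    intro v
    have hnn : 0 ≤ ∫ u in (0:ℝ)..t, Qf (D u) v := by
      refine intervalIntegral.integral_nonneg ht fun u hu => ?_
      rw [hQD v u]
      exact hσpos u hu _
    have := hFTC v t
    linarith
  -- kernel inclusion
  have hker : ∀ x : Fin n → ℂ, σ t *ᵥ x = 0 → ρ 0 *ᵥ x = 0 := by
    intro x hx
    have hQt : Qf (σ t) x = 0 := by simp [Qf, hx]
    have h1 : Qf (ρ 0) x ≤ 0 := by
      have := hmono2 x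
      rw [hσ0] at this
      linarith
    have h2 := h0.dotProduct_mulVec_nonneg x
    have h3 : star x ⬝ᵥ ρ 0 *ᵥ x = 0 := by
      have hre := (Complex.le_def.mp h2).1
      have him := (Complex.le_def.mp h2).2
      have hre' : (star x ⬝ᵥ ρ 0 *ᵥ x).re = 0 := by
        simp only [Complex.zero_re] at hre
        have : (star x ⬝ᵥ ρ 0 *ᵥ x).re ≤ 0 := h1
        linarith
      apply Complex.ext
      · simpa using hre'
      · simpa using him.symm
    exact (h0.dotProduct_mulVec_zero_iff x).mp h3
  -- rank comparison
  have hdet : IsUnit (matExp K t).det := by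
    have hdd : (matExp K t).det * (matExp K (-t)).det = 1 := by
      rw [← Matrix.det_mul, matExp_mul_neg, Matrix.det_one]
    exact IsUnit.of_mul_eq_one _ hdd
  have hrankσ : (σ t).rank = (ρ t).rank := by
    show (matExp K t * (ρ t * matExp K t)).rank = (ρ t).rank
    rw [Matrix.rank_mul_eq_right_of_isUnit_det _ _ hdet,
      Matrix.rank_mul_eq_left_of_isUnit_det _ _ hdet]
  have hkerle : LinearMap.ker (σ t).mulVecLin ≤ LinearMap.ker (ρ 0).mulVecLin := by
    intro x hx
    rw [LinearMap.mem_ker, Matrix.mulVecLin_apply] at hx ⊢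
    exact hker x hx
  have h1 := LinearMap.finrank_range_add_finrank_ker (σ t).mulVecLin
  have h2 := LinearMap.finrank_range_add_finrank_ker (ρ 0).mulVecLin
  have h3 := Submodule.finrank_mono hkerle
  have hr1 : (σ t).rank = Module.finrank ℂ (LinearMap.range (σ t).mulVecLin) := rfl
  have hr2 : (ρ 0).rank = Module.finrank ℂ (LinearMap.range (ρ 0).mulVecLin) := rfl
  have hr3 : (ρ 0).rank ≤ (σ t).rank := by omega
  rw [← hrankσ]
  exact hr3
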